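/- Suppose ρ > 1/2, and for b > 0 let r(b) denote the unique minimizer of a ↦ c(a;b) over [0,∞). Then b^e < b^e/(4(1−ρ)²), r is monotone increasing on the interval (0, b^e/(4(1−ρ)²)) (follow-the-crowd behaviour), and r is monotone decreasing on the interval (b^e/(4(1−ρ)²), b^e/(1−ρ)²) (avoid-the-crowd behaviour). -/

import Mathlib

/-- Expected waiting time `W(a; b)` of a tagged customer bidding `a` when all
other customers bid `b`, in the homogeneous accumulating-priority M/G/1 queue
with utilization `ρ` and mean residual service time `W0`. -/
noncomputable def waitW (ρ W0 b a : ℝ) : ℝ :=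
  if a ≤ b then W0 / (1 - ρ) * b / ((1 - ρ) * b + ρ * a)
  else W0 / (1 - ρ) * ((1 - ρ) * a + ρ * b) / a

/-- Cost `c(a;b) = C·W(a;b) + a` of a tagged customer bidding `a` against crowd bid `b`. -/
noncomputable def costC (ρ W0 C b a : ℝ) : ℝ := C * waitW ρ W0 b a + a

/-- The equilibrium bid `b^e = CρW₀/(1-ρ)`. -/
noncomputable def eqBid (ρ W0 C : ℝ) : ℝ := C * ρ * W0 / (1 - ρ)

section Helpers

variable {ρ W0 C : ℝ}

private lemma costC_left' (M : ℝ) (hM : M = C * W0 / (1 - ρ)) {b a : ℝ} (hab : a ≤ b) :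
    costC ρ W0 C b a = M * b / ((1 - ρ) * b + ρ * a) + a := by
  subst hM; simp only [costC, waitW, if_pos hab]; ring

private lemma costC_right' (M : ℝ) (hM : M = C * W0 / (1 - ρ)) {b a : ℝ} (hab : ¬ a ≤ b) :
    costC ρ W0 C b a = M * ((1 - ρ) * a + ρ * b) / a + a := by
  subst hM; simp only [costC, waitW, if_neg hab]; ring

/-- For `b < b^e`, the candidate `√(b^e b)` is a global minimizer. -/
private lemma min_lt (hρ0 : 0 < ρ) (hρ1 : ρ < 1) (hW0 : 0 < W0) (hC : 0 < C)
    {b : ℝ} (hb : 0 < b) (hlt : b < eqBid ρ W0 C) :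
    ∀ a, 0 ≤ a → costC ρ W0 C b (Real.sqrt (eqBid ρ W0 C * b)) ≤ costC ρ W0 C b a := by
  have h1ρ : 0 < 1 - ρ := by linarith
  obtain ⟨M, hM_def⟩ : ∃ x : ℝ, x = C * W0 / (1 - ρ) := ⟨_, rfl⟩
  have hM : 0 < M := by rw [hM_def]; exact div_pos (by positivity) h1ρ
  have hbeM : eqBid ρ W0 C = ρ * M := by rw [eqBid, hM_def]; ring
  have hbe0 : 0 < eqBid ρ W0 C := by rw [hbeM]; positivity
  intro a ha
  obtain ⟨s, hs_def⟩ : ∃ x : ℝ, x = Real.sqrt (eqBid ρ W0 C * b) := ⟨_, rfl⟩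
  rw [← hs_def]
  have hsq : s ^ 2 = ρ * M * b := by
    rw [hs_def, Real.sq_sqrt (mul_nonneg hbe0.le hb.le), hbeM]
  have hs0 : 0 < s := hs_def ▸ Real.sqrt_pos.2 (mul_pos hbe0 hb)
  have hlt' : b < ρ * M := hbeM ▸ hlt
  have hbs : b < s := by nlinarith [hsq, hs0, hb, hlt']
  have h2s : 2 * s ≤ ρ * M + b := by nlinarith [sq_nonneg (ρ * M - b), hsq, hs0, hM, hb, hρ0]
  have hval : M * ((1 - ρ) * s + ρ * b) / s + s = M * (1 - ρ) + 2 * s := by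
    rw [div_add' _ _ _ hs0.ne', div_eq_iff hs0.ne']
    linear_combination -hsq
  rw [costC_right' M hM_def (not_le.2 hbs), hval]
  by_cases hab : a ≤ b
  · rw [costC_left' M hM_def hab]
    have ht : 0 < (1 - ρ) * b + ρ * a := by
      have := mul_pos h1ρ hb; have := mul_nonneg hρ0.le ha; linarith
    have htle : (1 - ρ) * b + ρ * a ≤ b := by nlinarith [mul_le_mul_of_nonneg_left hab hρ0.le]
    have h1 : (0:ℝ) ≤ (b - a) * (ρ * M - ((1 - ρ) * b + ρ * a)) :=
      mul_nonneg (by linarith) (by linarith)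
    have h2 : (0:ℝ) ≤ (ρ * M + b - 2 * s) * ((1 - ρ) * b + ρ * a) :=
      mul_nonneg (by linarith) ht.le
    have hkey : (M * (1 - ρ) + 2 * s - a) * ((1 - ρ) * b + ρ * a) ≤ M * b := by
      nlinarith [h1, h2]
    have := (le_div_iff₀ ht).2 hkey
    linarith
  · have ha0 : 0 < a := hb.trans (not_le.1 hab)
    rw [costC_right' M hM_def hab]
    have hkey : (M * (1 - ρ) + 2 * s - a) * a ≤ M * ((1 - ρ) * a + ρ * b) := by
      nlinarith [sq_nonneg (s - a), hsq]
    have := (le_div_iff₀ ha0).2 hkey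
    linarith

/-- For `b^e ≤ b ≤ b^e/(1-ρ)²`, the candidate `(√(b^e b) - (1-ρ)b)/ρ` is a
global minimizer. -/
private lemma min_ge (hρ0 : 0 < ρ) (hρ1 : ρ < 1) (hW0 : 0 < W0) (hC : 0 < C)
    {b : ℝ} (hge : eqBid ρ W0 C ≤ b) (hle2 : b ≤ eqBid ρ W0 C / (1 - ρ) ^ 2) :
    ∀ a, 0 ≤ a →
      costC ρ W0 C b ((Real.sqrt (eqBid ρ W0 C * b) - (1 - ρ) * b) / ρ) ≤ costC ρ W0 C b a := by
  have h1ρ : 0 < 1 - ρ := by linarith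
  obtain ⟨M, hM_def⟩ : ∃ x : ℝ, x = C * W0 / (1 - ρ) := ⟨_, rfl⟩
  have hM : 0 < M := by rw [hM_def]; exact div_pos (by positivity) h1ρ
  have hbeM : eqBid ρ W0 C = ρ * M := by rw [eqBid, hM_def]; ring
  have hbe0 : 0 < eqBid ρ W0 C := by rw [hbeM]; positivity
  have hb : 0 < b := lt_of_lt_of_le hbe0 hge
  intro a ha
  obtain ⟨s, hs_def⟩ : ∃ x : ℝ, x = Real.sqrt (eqBid ρ W0 C * b) := ⟨_, rfl⟩
  rw [← hs_def]
  have hsq : s ^ 2 = ρ * M * b := by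
    rw [hs_def, Real.sq_sqrt (mul_nonneg hbe0.le hb.le), hbeM]
  have hs0 : 0 < s := hs_def ▸ Real.sqrt_pos.2 (mul_pos hbe0 hb)
  have hbM : ρ * M ≤ b := hbeM ▸ hge
  have hb2 : b * (1 - ρ) ^ 2 ≤ ρ * M := by
    have := (le_div_iff₀ (by positivity : (0:ℝ) < (1 - ρ) ^ 2)).1 (hbeM ▸ hle2)
    linarith
  have hsb : (1 - ρ) * b ≤ s := by
    nlinarith [hsq, hs0, hb, mul_le_mul_of_nonneg_right hb2 hb.le, mul_pos h1ρ hb]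
  have hsle : s ≤ b := by nlinarith [hsq, hbM, hs0, hb]
  have h2s : 2 * s ≤ ρ * M + b := by nlinarith [sq_nonneg (ρ * M - b), hsq, hs0, hM, hb, hρ0]
  have hqb : (s - (1 - ρ) * b) / ρ ≤ b := by rw [div_le_iff₀ hρ0]; nlinarith
  have ht_q : (1 - ρ) * b + ρ * ((s - (1 - ρ) * b) / ρ) = s := by field_simp; ring
  rw [costC_left' M hM_def hqb, ht_q]
  by_cases hab : a ≤ b
  · rw [costC_left' M hM_def hab]
    have ht : 0 < (1 - ρ) * b + ρ * a := by
      have := mul_pos h1ρ hb; have := mul_nonneg hρ0.le ha; linarith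
    have hz : (s - ((1 - ρ) * b + ρ * a)) * (ρ * M * b - s ^ 2) = 0 := by
      rw [← hsq]; ring
    have hE : (M * b + a * ((1 - ρ) * b + ρ * a)) * (s * ρ)
        - (M * b * ρ + (s - (1 - ρ) * b) * s) * ((1 - ρ) * b + ρ * a)
        = s * (s - ((1 - ρ) * b + ρ * a)) ^ 2
          + (s - ((1 - ρ) * b + ρ * a)) * (ρ * M * b - s ^ 2) := by ring
    have hcross : (M * b * ρ + (s - (1 - ρ) * b) * s) * ((1 - ρ) * b + ρ * a)
        ≤ (M * b + a * ((1 - ρ) * b + ρ * a)) * (s * ρ) := by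
      linarith [hE, hz, mul_nonneg hs0.le (sq_nonneg (s - ((1 - ρ) * b + ρ * a)))]
    have hL : M * b / s + (s - (1 - ρ) * b) / ρ
        = (M * b * ρ + (s - (1 - ρ) * b) * s) / (s * ρ) := by
      field_simp
      try ring
    have hR : M * b / ((1 - ρ) * b + ρ * a) + a
        = (M * b + a * ((1 - ρ) * b + ρ * a)) / ((1 - ρ) * b + ρ * a) := by
      field_simp
    rw [hL, hR, div_le_div_iff₀ (mul_pos hs0 hρ0) ht]
    exact hcross
  · have ha0 : 0 < a := hb.trans (not_le.1 hab)
    rw [costC_right' M hM_def hab]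
    have hMbs : M * b / s = s / ρ := by
      rw [div_eq_div_iff hs0.ne' hρ0.ne']
      linear_combination -hsq
    have hVq : M * b / s + (s - (1 - ρ) * b) / ρ ≤ M + b := by
      rw [hMbs, ← add_div, div_le_iff₀ hρ0]; linarith [h2s]
    have hkey : (M + b - a) * a ≤ M * ((1 - ρ) * a + ρ * b) := by
      nlinarith [mul_nonneg (by linarith [not_le.1 hab] : (0:ℝ) ≤ a - b)
        (by linarith [not_le.1 hab, hbM] : (0:ℝ) ≤ a - ρ * M)]
    have := (le_div_iff₀ ha0).2 hkey
    linarith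

private lemma gmono_aux (hρ0 : 0 < ρ) {e u v : ℝ} (huv : u ≤ v)
    (hcond : (1 - ρ) * (u + v) ≤ e) :
    (e * u - (1 - ρ) * u ^ 2) / ρ ≤ (e * v - (1 - ρ) * v ^ 2) / ρ := by
  have h : e * u - (1 - ρ) * u ^ 2 ≤ e * v - (1 - ρ) * v ^ 2 := by
    nlinarith [mul_nonneg (sub_nonneg.2 huv) (sub_nonneg.2 hcond)]
  exact (div_le_div_iff_of_pos_right hρ0).2 h

private lemma ganti_aux (hρ0 : 0 < ρ) {e u v : ℝ} (huv : u ≤ v)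
    (hcond : e ≤ (1 - ρ) * (u + v)) :
    (e * v - (1 - ρ) * v ^ 2) / ρ ≤ (e * u - (1 - ρ) * u ^ 2) / ρ := by
  have h : e * v - (1 - ρ) * v ^ 2 ≤ e * u - (1 - ρ) * u ^ 2 := by
    nlinarith [mul_nonneg (sub_nonneg.2 huv) (sub_nonneg.2 hcond)]
  exact (div_le_div_iff_of_pos_right hρ0).2 h

private lemma sq_le_helper {x e : ℝ} (hx : 0 ≤ x) (he : 0 ≤ e) (h : x ^ 2 ≤ e ^ 2) :
    x ≤ e := by nlinarith

private lemma sqrt_form (ρ : ℝ) {be b : ℝ} (hbe : 0 ≤ be) (hb : 0 ≤ b) :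
    (Real.sqrt (be * b) - (1 - ρ) * b) / ρ
      = (Real.sqrt be * Real.sqrt b - (1 - ρ) * (Real.sqrt b) ^ 2) / ρ := by
  rw [Real.sqrt_mul hbe, Real.sq_sqrt hb]

end Helpers

/-- If `ρ > 1/2` and `r b` is, for each `b > 0`, the unique minimizer of
`a ↦ c(a;b)` over `[0,∞)`, then `b^e < b^e/(4(1-ρ)²)`, `r` is monotone
increasing (FTC) on `(0, b^e/(4(1-ρ)²))` and monotone decreasing (ATC) on
`(b^e/(4(1-ρ)²), b^e/(1-ρ)²)`. -/
theorem best_response_FTC_ATC_high_rho (ρ W0 C : ℝ) (hρ0 : 0 < ρ) (hρ1 : ρ < 1)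
    (hW0 : 0 < W0) (hC : 0 < C) (hρhalf : 1 / 2 < ρ) (r : ℝ → ℝ)
    (hr : ∀ b : ℝ, 0 < b →
      0 ≤ r b ∧ (∀ a : ℝ, 0 ≤ a → costC ρ W0 C b (r b) ≤ costC ρ W0 C b a) ∧
      (∀ a : ℝ, 0 ≤ a → (∀ a' : ℝ, 0 ≤ a' → costC ρ W0 C b a ≤ costC ρ W0 C b a') →
        a = r b)) :
    eqBid ρ W0 C < eqBid ρ W0 C / (4 * (1 - ρ) ^ 2) ∧
    MonotoneOn r (Set.Ioo 0 (eqBid ρ W0 C / (4 * (1 - ρ) ^ 2))) ∧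
    AntitoneOn r (Set.Ioo (eqBid ρ W0 C / (4 * (1 - ρ) ^ 2))
      (eqBid ρ W0 C / (1 - ρ) ^ 2)) := by
  have h1ρ : 0 < 1 - ρ := by linarith
  have hbe0 : 0 < eqBid ρ W0 C := by
    rw [eqBid]; exact div_pos (by positivity) h1ρ
  have h4 : (0:ℝ) < 4 * (1 - ρ) ^ 2 := by positivity
  have hp2 : (0:ℝ) < (1 - ρ) ^ 2 := by positivity
  have h41 : 4 * (1 - ρ) ^ 2 < 1 := by nlinarith
  have hfirst : eqBid ρ W0 C < eqBid ρ W0 C / (4 * (1 - ρ) ^ 2) := by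
    rw [lt_div_iff₀ h4]; nlinarith [hbe0]
  have hBle : eqBid ρ W0 C / (4 * (1 - ρ) ^ 2) ≤ eqBid ρ W0 C / (1 - ρ) ^ 2 := by
    rw [div_le_div_iff₀ h4 hp2]; nlinarith [mul_nonneg hbe0.le hp2.le]
  -- explicit formulas for the best response
  have hrlt : ∀ b : ℝ, 0 < b → b < eqBid ρ W0 C →
      r b = Real.sqrt (eqBid ρ W0 C * b) := fun b hb hlt =>
    ((hr b hb).2.2 _ (Real.sqrt_nonneg _) (min_lt hρ0 hρ1 hW0 hC hb hlt)).symm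
  have hrge : ∀ b : ℝ, eqBid ρ W0 C ≤ b → b ≤ eqBid ρ W0 C / (1 - ρ) ^ 2 →
      r b = (Real.sqrt (eqBid ρ W0 C * b) - (1 - ρ) * b) / ρ := by
    intro b hgeb hleb
    have hb : 0 < b := lt_of_lt_of_le hbe0 hgeb
    have hb2 : b * (1 - ρ) ^ 2 ≤ eqBid ρ W0 C := (le_div_iff₀ hp2).1 hleb
    have hcand0 : 0 ≤ (Real.sqrt (eqBid ρ W0 C * b) - (1 - ρ) * b) / ρ := by
      apply div_nonneg _ hρ0.le
      have h1 : ((1 - ρ) * b) ^ 2 ≤ eqBid ρ W0 C * b := by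
        nlinarith [mul_le_mul_of_nonneg_right hb2 hb.le]
      have h2 := Real.sqrt_le_sqrt h1
      rw [Real.sqrt_sq (by positivity : (0:ℝ) ≤ (1 - ρ) * b)] at h2
      linarith
    exact ((hr b hb).2.2 _ hcand0 (min_ge hρ0 hρ1 hW0 hC hgeb hleb)).symm
  refine ⟨hfirst, ?_, ?_⟩
  · -- MonotoneOn
    rintro b₁ ⟨hb₁0, hb₁B⟩ b₂ ⟨hb₂0, hb₂B⟩ h12
    by_cases hc2 : b₂ < eqBid ρ W0 C
    · have hc1 : b₁ < eqBid ρ W0 C := lt_of_le_of_lt h12 hc2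
      rw [hrlt b₁ hb₁0 hc1, hrlt b₂ hb₂0 hc2]
      exact Real.sqrt_le_sqrt (by nlinarith [hbe0])
    · push_neg at hc2
      have hb₂le : b₂ ≤ eqBid ρ W0 C / (1 - ρ) ^ 2 := le_of_lt (lt_of_lt_of_le hb₂B hBle)
      rw [hrge b₂ hc2 hb₂le, sqrt_form ρ hbe0.le hb₂0.le]
      have he2 : (Real.sqrt (eqBid ρ W0 C)) ^ 2 = eqBid ρ W0 C := Real.sq_sqrt hbe0.le
      have hv2 : (Real.sqrt b₂) ^ 2 = b₂ := Real.sq_sqrt hb₂0.le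
      have he0 : 0 ≤ Real.sqrt (eqBid ρ W0 C) := Real.sqrt_nonneg _
      have hv0 : 0 ≤ Real.sqrt b₂ := Real.sqrt_nonneg _
      have hb₂B' : b₂ * (4 * (1 - ρ) ^ 2) < eqBid ρ W0 C := (lt_div_iff₀ h4).1 hb₂B
      have h2v : 2 * ((1 - ρ) * Real.sqrt b₂) ≤ Real.sqrt (eqBid ρ W0 C) := by
        apply sq_le_helper (by positivity) he0
        have hv2' : 4 * (1 - ρ) ^ 2 * (Real.sqrt b₂) ^ 2 = 4 * (1 - ρ) ^ 2 * b₂ := by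
          rw [hv2]
        nlinarith [hv2', hb₂B', he2]
      by_cases hc1 : b₁ < eqBid ρ W0 C
      · rw [hrlt b₁ hb₁0 hc1]
        have hev : Real.sqrt (eqBid ρ W0 C) ≤ Real.sqrt b₂ := Real.sqrt_le_sqrt hc2
        have hcond : (1 - ρ) * (Real.sqrt (eqBid ρ W0 C) + Real.sqrt b₂)
            ≤ Real.sqrt (eqBid ρ W0 C) := by
          linarith [h2v, mul_nonneg he0 (by linarith : (0:ℝ) ≤ ρ - 1/2)]
        calc Real.sqrt (eqBid ρ W0 C * b₁)
            ≤ Real.sqrt (eqBid ρ W0 C * eqBid ρ W0 C) :=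
              Real.sqrt_le_sqrt (by nlinarith [hbe0])
          _ = Real.sqrt (eqBid ρ W0 C) * Real.sqrt (eqBid ρ W0 C) :=
              Real.sqrt_mul hbe0.le _
          _ = (Real.sqrt (eqBid ρ W0 C) * Real.sqrt (eqBid ρ W0 C)
                - (1 - ρ) * (Real.sqrt (eqBid ρ W0 C)) ^ 2) / ρ := by
              rw [eq_div_iff hρ0.ne']; ring
          _ ≤ (Real.sqrt (eqBid ρ W0 C) * Real.sqrt b₂
                - (1 - ρ) * (Real.sqrt b₂) ^ 2) / ρ := gmono_aux hρ0 hev hcond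
      · push_neg at hc1
        have hb₁le : b₁ ≤ eqBid ρ W0 C / (1 - ρ) ^ 2 := le_of_lt (lt_of_lt_of_le hb₁B hBle)
        rw [hrge b₁ hc1 hb₁le, sqrt_form ρ hbe0.le hb₁0.le]
        have huv : Real.sqrt b₁ ≤ Real.sqrt b₂ := Real.sqrt_le_sqrt h12
        have hu0 : 0 ≤ Real.sqrt b₁ := Real.sqrt_nonneg _
        have hcond : (1 - ρ) * (Real.sqrt b₁ + Real.sqrt b₂) ≤ Real.sqrt (eqBid ρ W0 C) := by
          linarith [h2v, mul_le_mul_of_nonneg_left huv h1ρ.le]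
        exact gmono_aux hρ0 huv hcond
  · -- AntitoneOn
    rintro b₁ ⟨hb₁B, hb₁U⟩ b₂ ⟨hb₂B, hb₂U⟩ h12
    have hge1 : eqBid ρ W0 C ≤ b₁ := le_of_lt (lt_trans hfirst hb₁B)
    have hge2 : eqBid ρ W0 C ≤ b₂ := le_trans hge1 h12
    have hb₁0 : 0 < b₁ := lt_of_lt_of_le hbe0 hge1
    have hb₂0 : 0 < b₂ := lt_of_lt_of_le hbe0 hge2
    rw [hrge b₁ hge1 hb₁U.le, hrge b₂ hge2 hb₂U.le,
      sqrt_form ρ hbe0.le hb₁0.le, sqrt_form ρ hbe0.le hb₂0.le]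
    have huv : Real.sqrt b₁ ≤ Real.sqrt b₂ := Real.sqrt_le_sqrt h12
    have he2 : (Real.sqrt (eqBid ρ W0 C)) ^ 2 = eqBid ρ W0 C := Real.sq_sqrt hbe0.le
    have hu2 : (Real.sqrt b₁) ^ 2 = b₁ := Real.sq_sqrt hb₁0.le
    have he0 : 0 ≤ Real.sqrt (eqBid ρ W0 C) := Real.sqrt_nonneg _
    have hu0 : 0 ≤ Real.sqrt b₁ := Real.sqrt_nonneg _
    have hb₁B' : eqBid ρ W0 C < b₁ * (4 * (1 - ρ) ^ 2) := (div_lt_iff₀ h4).1 hb₁B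
    have h2u : Real.sqrt (eqBid ρ W0 C) ≤ 2 * ((1 - ρ) * Real.sqrt b₁) := by
      apply sq_le_helper he0 (by positivity)
      have hu2' : 4 * (1 - ρ) ^ 2 * (Real.sqrt b₁) ^ 2 = 4 * (1 - ρ) ^ 2 * b₁ := by
        rw [hu2]
      nlinarith [hu2', hb₁B', he2]
    have hcond : Real.sqrt (eqBid ρ W0 C) ≤ (1 - ρ) * (Real.sqrt b₁ + Real.sqrt b₂) := by
      linarith [h2u, mul_le_mul_of_nonneg_left huv h1ρ.le]
    exact ganti_aux hρ0 huv hcond
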